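/- The Clifford algebra G(0,3) = CliffordAlgebra Q of the negative definite quadratic form Q(v)=−v₁²−v₂²−v₃² on ℝ³ is isomorphic as an ℝ-algebra to ℍ × ℍ (equivalently to the tensor product of the split-complex numbers ℝ × ℝ with ℍ over ℝ). -/

import Mathlib

open CliffordAlgebra
open scoped Quaternion

/-- The quadratic form `Q(v) = -v₁² - v₂² - v₃²` on `ℝ³` (signature (0,3)). -/
noncomputable def Q03 : QuadraticForm ℝ (Fin 3 → ℝ) :=
  QuadraticMap.weightedSumSquares ℝ ![(-1 : ℝ), -1, -1]

lemma Q03_apply (v : Fin 3 → ℝ) :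
    Q03 v = -(v 0 * v 0) + -(v 1 * v 1) + -(v 2 * v 2) := by
  simp [Q03, QuadraticMap.weightedSumSquares_apply, Fin.sum_univ_three]

noncomputable def fLin : (Fin 3 → ℝ) →ₗ[ℝ] ℍ[ℝ] × ℍ[ℝ] where
  toFun v := (⟨0, v 0, v 1, v 2⟩, ⟨0, -v 0, -v 1, -v 2⟩)
  map_add' x y := by ext <;> simp <;> (show _ = _ + _; simp) <;> ring
  map_smul' c x := by ext <;> simp <;> (show _ = _ • _; simp) <;> ring

lemma fLin_sq (v : Fin 3 → ℝ) :
    fLin v * fLin v = algebraMap ℝ (ℍ[ℝ] × ℍ[ℝ]) (Q03 v) := by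
  rw [Q03_apply]
  ext <;>
    simp only [Prod.fst_add, Prod.snd_add, Prod.smul_fst, Prod.smul_snd, Prod.fst_mul,
      Prod.snd_mul, Quaternion.re_add, Quaternion.imI_add, Quaternion.imJ_add, Quaternion.imK_add,
      Quaternion.re_smul, Quaternion.imI_smul, Quaternion.imJ_smul, Quaternion.imK_smul,
      Quaternion.re_mul, Quaternion.imI_mul, Quaternion.imJ_mul, Quaternion.imK_mul] <;>
    simp [fLin, Quaternion.ext_iff, Quaternion.re_mul, Quaternion.imI_mul,
      Quaternion.imJ_mul, Quaternion.imK_mul] <;> ring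

noncomputable def toH2 : CliffordAlgebra Q03 →ₐ[ℝ] ℍ[ℝ] × ℍ[ℝ] :=
  CliffordAlgebra.lift Q03 ⟨fLin, fLin_sq⟩

/-- standard basis vectors -/
noncomputable def ee (i : Fin 3) : Fin 3 → ℝ := Pi.single i 1

lemma ee_decomp (v : Fin 3 → ℝ) : v = v 0 • ee 0 + v 1 • ee 1 + v 2 • ee 2 := by
  funext j; fin_cases j <;> simp [ee]

noncomputable abbrev ι0 : CliffordAlgebra Q03 := ι Q03 (ee 0)
noncomputable abbrev ι1 : CliffordAlgebra Q03 := ι Q03 (ee 1)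
noncomputable abbrev ι2 : CliffordAlgebra Q03 := ι Q03 (ee 2)

lemma sq0 : ι0 * ι0 = -1 := by
  rw [ι_sq_scalar]
  have : Q03 (ee 0) = -1 := by rw [Q03_apply]; simp [ee]
  rw [this, map_neg, map_one]

lemma sq1 : ι1 * ι1 = -1 := by
  rw [ι_sq_scalar]
  have : Q03 (ee 1) = -1 := by rw [Q03_apply]; simp [ee]
  rw [this, map_neg, map_one]

lemma sq2 : ι2 * ι2 = -1 := by
  rw [ι_sq_scalar]
  have : Q03 (ee 2) = -1 := by rw [Q03_apply]; simp [ee]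
  rw [this, map_neg, map_one]

lemma anti (i j : Fin 3) (h : i ≠ j) :
    ι Q03 (ee i) * ι Q03 (ee j) = -(ι Q03 (ee j) * ι Q03 (ee i)) := by
  have := CliffordAlgebra.ι_mul_ι_add_swap (Q := Q03) (ee i) (ee j)
  have hp : QuadraticMap.polar Q03 (ee i) (ee j) = 0 := by
    simp only [QuadraticMap.polar, Q03_apply]
    fin_cases i <;> fin_cases j <;> simp_all [ee] <;> ring
  rw [hp, map_zero] at this
  exact eq_neg_of_add_eq_zero_left this

noncomputable def mB : Fin 8 → CliffordAlgebra Q03 :=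
  ![1, ι0, ι1, ι2, ι0 * ι1, ι0 * ι2, ι1 * ι2, ι0 * (ι1 * ι2)]

noncomputable def S : Submodule ℝ (CliffordAlgebra Q03) :=
  Submodule.span ℝ (Set.range mB)

lemma a10 : ι1 * ι0 = -(ι0 * ι1) := anti 1 0 (by decide)
lemma a20 : ι2 * ι0 = -(ι0 * ι2) := anti 2 0 (by decide)
lemma a21 : ι2 * ι1 = -(ι1 * ι2) := anti 2 1 (by decide)

lemma a10' (x : CliffordAlgebra Q03) : ι1 * (ι0 * x) = -(ι0 * (ι1 * x)) := by
  rw [← mul_assoc, a10, neg_mul, mul_assoc]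
lemma a20' (x : CliffordAlgebra Q03) : ι2 * (ι0 * x) = -(ι0 * (ι2 * x)) := by
  rw [← mul_assoc, a20, neg_mul, mul_assoc]
lemma a21' (x : CliffordAlgebra Q03) : ι2 * (ι1 * x) = -(ι1 * (ι2 * x)) := by
  rw [← mul_assoc, a21, neg_mul, mul_assoc]
lemma sq0' (x : CliffordAlgebra Q03) : ι0 * (ι0 * x) = -x := by
  rw [← mul_assoc, sq0, neg_one_mul]
lemma sq1' (x : CliffordAlgebra Q03) : ι1 * (ι1 * x) = -x := by
  rw [← mul_assoc, sq1, neg_one_mul]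
lemma sq2' (x : CliffordAlgebra Q03) : ι2 * (ι2 * x) = -x := by
  rw [← mul_assoc, sq2, neg_one_mul]

lemma mB0 : mB 0 = 1 := rfl
lemma mB1 : mB 1 = ι0 := rfl
lemma mB2 : mB 2 = ι1 := rfl
lemma mB3 : mB 3 = ι2 := rfl
lemma mB4 : mB 4 = ι0 * ι1 := rfl
lemma mB5 : mB 5 = ι0 * ι2 := rfl
lemma mB6 : mB 6 = ι1 * ι2 := rfl
lemma mB7 : mB 7 = ι0 * (ι1 * ι2) := rfl

lemma key (i : Fin 3) (k : Fin 8) : ι Q03 (ee i) * mB k ∈ S := by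
  have hm : ∀ k, mB k ∈ S := fun k => Submodule.subset_span ⟨k, rfl⟩
  have h1 : (1 : CliffordAlgebra Q03) ∈ S := hm 0
  have h0' : ι0 ∈ S := hm 1
  have h1' : ι1 ∈ S := hm 2
  have h2' : ι2 ∈ S := hm 3
  have h01 : ι0 * ι1 ∈ S := hm 4
  have h02 : ι0 * ι2 ∈ S := hm 5
  have h12 : ι1 * ι2 ∈ S := hm 6
  have h012 : ι0 * (ι1 * ι2) ∈ S := hm 7
  fin_cases i <;> fin_cases k <;>
    simp only [Fin.zero_eta, Fin.mk_one, Fin.reduceFinMk, mB0, mB1, mB2, mB3, mB4, mB5, mB6, mB7, Matrix.cons_val_zero,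
      Matrix.cons_val_one, Matrix.head_cons, Matrix.cons_val_two, Matrix.tail_cons,
      Matrix.cons_val_three, Matrix.cons_val_four, Matrix.cons_val', Matrix.cons_val_fin_one,
      Matrix.empty_val', Matrix.cons_val_succ,
      sq0, sq1, sq2, a10, a20, a21, a10', a20', a21', sq0', sq1', sq2',
      mul_one, one_mul, mul_neg, neg_neg, mul_assoc, Fin.isValue] <;>
    first
      | exact h1 | exact h0' | exact h1' | exact h2' | exact h01 | exact h02
      | exact h12 | exact h012
      | exact S.neg_mem h1 | exact S.neg_mem h0' | exact S.neg_mem h1'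
      | exact S.neg_mem h2' | exact S.neg_mem h01 | exact S.neg_mem h02
      | exact S.neg_mem h12 | exact S.neg_mem h012

lemma ι_decomp (v : Fin 3 → ℝ) :
    ι Q03 v = v 0 • ι0 + v 1 • ι1 + v 2 • ι2 := by
  have := congrArg (ι Q03) (ee_decomp v)
  simpa using this

lemma ι_mul_mem {x : CliffordAlgebra Q03} (v : Fin 3 → ℝ) (hx : x ∈ S) :
    ι Q03 v * x ∈ S := by
  induction hx using Submodule.span_induction with
  | mem y hy =>
    obtain ⟨k, rfl⟩ := hy
    rw [ι_decomp, add_mul, add_mul, smul_mul_assoc, smul_mul_assoc, smul_mul_assoc]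
    exact S.add_mem (S.add_mem (S.smul_mem _ (key 0 k)) (S.smul_mem _ (key 1 k)))
      (S.smul_mem _ (key 2 k))
  | zero => simpa using S.zero_mem
  | add y z _ _ hy hz => rw [mul_add]; exact S.add_mem hy hz
  | smul a y _ hy => rw [mul_smul_comm]; exact S.smul_mem a hy

lemma mem_S (x : CliffordAlgebra Q03) : x ∈ S := by
  induction x using CliffordAlgebra.left_induction with
  | algebraMap r =>
    rw [Algebra.algebraMap_eq_smul_one]
    exact S.smul_mem r (Submodule.subset_span ⟨0, rfl⟩)
  | add x y hx hy => exact S.add_mem hx hy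
  | ι_mul x v hx => exact ι_mul_mem v hx

lemma S_top : S = ⊤ := top_unique fun x _ => mem_S x

lemma span_range_mB : Submodule.span ℝ (Set.range mB) = ⊤ := S_top

noncomputable instance : Module.Finite ℝ (CliffordAlgebra Q03) := by
  classical
  exact ⟨⟨Finset.univ.image mB, by
    rw [Finset.coe_image, Finset.coe_univ, Set.image_univ]; exact span_range_mB⟩⟩

lemma finrank_Cl_le : Module.finrank ℝ (CliffordAlgebra Q03) ≤ 8 := by
  simpa using finrank_le_of_span_eq_top span_range_mB

lemma toH2_ι (v : Fin 3 → ℝ) : toH2 (ι Q03 v) = fLin v := by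
  rw [toH2]
  exact CliffordAlgebra.lift_ι_apply _ _ _

lemma span_img : Submodule.span ℝ (Set.range (toH2 ∘ mB)) = ⊤ := by
  refine top_unique fun y _ => ?_
  obtain ⟨a, b⟩ := y
  have h : ((a, b) : ℍ[ℝ] × ℍ[ℝ]) =
      ((a.re + b.re) / 2) • (toH2 ∘ mB) 0 +
      ((a.imI - b.imI) / 2) • (toH2 ∘ mB) 1 +
      ((a.imJ - b.imJ) / 2) • (toH2 ∘ mB) 2 +
      ((a.imK - b.imK) / 2) • (toH2 ∘ mB) 3 +
      ((a.imK + b.imK) / 2) • (toH2 ∘ mB) 4 +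
      (-(a.imJ + b.imJ) / 2) • (toH2 ∘ mB) 5 +
      ((a.imI + b.imI) / 2) • (toH2 ∘ mB) 6 +
      ((b.re - a.re) / 2) • (toH2 ∘ mB) 7 := by
    simp only [Function.comp_apply, mB0, mB1, mB2, mB3, mB4, mB5, mB6, mB7,
      map_one, map_mul, toH2_ι]
    ext <;>
      simp only [Prod.fst_add, Prod.snd_add, Prod.smul_fst, Prod.smul_snd, Prod.fst_mul,
          Prod.snd_mul, Quaternion.re_add, Quaternion.imI_add, Quaternion.imJ_add, Quaternion.imK_add,
          Quaternion.re_smul, Quaternion.imI_smul, Quaternion.imJ_smul, Quaternion.imK_smul,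
          Quaternion.re_mul, Quaternion.imI_mul, Quaternion.imJ_mul, Quaternion.imK_mul] <;>
      simp [fLin, ee, Quaternion.re_mul, Quaternion.imI_mul, Quaternion.imJ_mul,
        Quaternion.imK_mul] <;> ring
  rw [h]
  have hk : ∀ k : Fin 8, (toH2 ∘ mB) k ∈ Submodule.span ℝ (Set.range (toH2 ∘ mB)) :=
    fun k => Submodule.subset_span ⟨k, rfl⟩
  exact Submodule.add_mem _ (Submodule.add_mem _ (Submodule.add_mem _ (Submodule.add_mem _
    (Submodule.add_mem _ (Submodule.add_mem _ (Submodule.add_mem _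
      (Submodule.smul_mem _ _ (hk 0)) (Submodule.smul_mem _ _ (hk 1)))
      (Submodule.smul_mem _ _ (hk 2))) (Submodule.smul_mem _ _ (hk 3)))
      (Submodule.smul_mem _ _ (hk 4))) (Submodule.smul_mem _ _ (hk 5)))
      (Submodule.smul_mem _ _ (hk 6))) (Submodule.smul_mem _ _ (hk 7))

lemma toH2_surj : Function.Surjective toH2 := by
  rw [← AlgHom.range_eq_top]
  refine top_unique fun y _ => ?_
  have : y ∈ Submodule.span ℝ (Set.range (toH2 ∘ mB)) := span_img ▸ Submodule.mem_top
  refine Submodule.span_induction ?_ ?_ ?_ ?_ this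
  · rintro x ⟨k, rfl⟩; exact ⟨mB k, rfl⟩
  · exact zero_mem _
  · intro x y _ _ hx hy; exact add_mem hx hy
  · intro a x _ hx; exact Subalgebra.smul_mem _ hx a

lemma finrank_H2 : Module.finrank ℝ (ℍ[ℝ] × ℍ[ℝ]) = 8 := by
  rw [Module.finrank_prod, Quaternion.finrank_eq_four]

lemma finrank_Cl : Module.finrank ℝ (CliffordAlgebra Q03) = 8 := by
  refine le_antisymm finrank_Cl_le ?_
  have h := LinearMap.finrank_range_le toH2.toLinearMap
  have hr : LinearMap.range toH2.toLinearMap = ⊤ :=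
    LinearMap.range_eq_top.mpr (by exact toH2_surj)
  rwa [hr, finrank_top, finrank_H2] at h

/-- `G(0,3)` is isomorphic as an `ℝ`-algebra to `ℍ × ℍ`. -/
theorem G03_iso_quaternion_prod :
    Nonempty (CliffordAlgebra Q03 ≃ₐ[ℝ] ℍ[ℝ] × ℍ[ℝ]) := by
  have hinj : Function.Injective toH2 :=
    (LinearMap.injective_iff_surjective_of_finrank_eq_finrank
      (f := toH2.toLinearMap) (by rw [finrank_Cl, finrank_H2])).mpr toH2_surj
  exact ⟨AlgEquiv.ofBijective toH2 ⟨hinj, toH2_surj⟩⟩
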